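/- Let G be a finite group with normal subgroups K ≤ H where K has a G-invariant linear character ζ, and suppose Ḡ ≤ G satisfies G = Ḡ·K and ζ restricts compatibly. Let H ∈ {subgroups of G containing K}, set H̄ = Ḡ ∩ H, and let φ be an irreducible character of H lying over ζ with restriction φ̄ = φ_{H̄} irreducible. Then G(φ) = (Ḡ(φ̄))·K, i.e., the stabilizer of φ in G corresponds to the stabilizer of φ̄ in Ḡ under the bijection H̄ ↦ H̄K. -/

import Mathlib

open scoped BigOperators Pointwise Classical

noncomputable section

variable {G : Type}

/-- Extension by zero to `G` of a function defined on a subgroup `H` of `G`. -/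
def extZero [Group G] (H : Subgroup G) (φ : H → ℂ) (g : G) : ℂ :=
  if h : g ∈ H then φ ⟨g, h⟩ else 0

/-- The character of `G` induced from the function `φ` on the subgroup `H`. -/
def indChar [Group G] [Fintype G] (H : Subgroup G) (φ : H → ℂ) : G → ℂ :=
  fun g => (Nat.card H : ℂ)⁻¹ * ∑ x : G, extZero H φ (x * g * x⁻¹)

/-- The character of an intermediate subgroup `K` induced from `φ` on `H ≤ K`,
viewed as a function on `G` supported on `K`. -/
def indCharTo [Group G] [Fintype G] (K H : Subgroup G) (φ : H → ℂ) : G → ℂ :=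
  fun g => (Nat.card H : ℂ)⁻¹ * ∑ x : G, if x ∈ K then extZero H φ (x * g * x⁻¹) else 0

/-- The kernel of a character: the set where it takes the value `f 1`. -/
def kerSet {X : Type*} [One X] (f : X → ℂ) : Set X := {x | f x = f 1}

/-- The center of a character: the set where `|f x| = f 1`. -/
def centSet {X : Type*} [One X] (f : X → ℂ) : Set X :=
  {x | ((‖f x‖ : ℝ) : ℂ) = f 1}

/-- The central character associated with a character. -/
def zetaChar {X : Type*} [One X] (f : X → ℂ) : X → ℂ := fun x => f x / f 1

/-- `f` is a (nonzero) complex character of `X`. -/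
def IsChar (X : Type) [Group X] (f : X → ℂ) : Prop :=
  (∃ V : FDRep ℂ X, FDRep.character V = f) ∧ f 1 ≠ 0

/-- `f` is an irreducible complex character of `X`. -/
def IsIrrChar (X : Type) [Group X] (f : X → ℂ) : Prop :=
  ∃ V : FDRep ℂ X, CategoryTheory.Simple V ∧ FDRep.character V = f

/-- The inner product of two class functions on the subgroup `H` of `G`. -/
def innerSub [Group G] [Fintype G] (H : Subgroup G) (f φ : H → ℂ) : ℂ :=
  (Nat.card H : ℂ)⁻¹ * ∑ x : G, extZero H f x * (starRingEnd ℂ) (extZero H φ x)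

/-- Restriction of a function on `K` to a smaller subgroup `L ≤ K`. -/
def resTo [Group G] {K : Subgroup G} (L : Subgroup G) (h : L ≤ K) (χ : K → ℂ) : L → ℂ :=
  fun x => χ ⟨x, h x.2⟩

/-- `lam : G → ℂ` is (the extension of) a linear character of the subgroup `L`. -/
def IsLinOn [Group G] (L : Subgroup G) (lam : G → ℂ) : Prop :=
  lam 1 = 1 ∧ ∀ a ∈ L, ∀ b ∈ L, lam (a * b) = lam a * lam b

/-- The stabilizer in `G` of the character `φ` of the subgroup `H`. -/
def stabSet [Group G] (H : Subgroup G) (φ : H → ℂ) : Set G :=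
  {g : G | (∀ x : G, x ∈ H ↔ g⁻¹ * x * g ∈ H) ∧
    ∀ x : G, extZero H φ (g⁻¹ * x * g) = extZero H φ x}

/-- The stabilizer in `G` of a linear character `lam` of a normal subgroup `L`,
as a subgroup of `G`. -/
def linStab [Group G] (L : Subgroup G) (hL : L.Normal) (lam : G → ℂ) : Subgroup G where
  carrier := {g : G | ∀ x ∈ L, lam (g⁻¹ * x * g) = lam x}
  one_mem' := by intro x hx; simp
  mul_mem' := by
    intro a b ha hb x hx
    have h1 : a⁻¹ * x * a ∈ L := by simpa using hL.conj_mem x hx a⁻¹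
    have key : (a * b)⁻¹ * x * (a * b) = b⁻¹ * (a⁻¹ * x * a) * b := by group
    rw [key, hb _ h1, ha _ hx]
  inv_mem' := by
    intro a ha x hx
    have h1 : a * x * a⁻¹ ∈ L := hL.conj_mem x hx a
    have h2 := ha _ h1
    rw [show a⁻¹ * (a * x * a⁻¹) * a = x from by group] at h2
    rw [show a⁻¹⁻¹ * x * a⁻¹ = a * x * a⁻¹ from by group]
    exact h2.symm


open CategoryTheory

lemma schur_scalar {X : Type} [Group X] (V : FDRep ℂ X) [Simple V]
    (T : V →ₗ[ℂ] V) (hT : ∀ g : X, T ∘ₗ V.ρ g = V.ρ g ∘ₗ T) :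
    ∃ c : ℂ, T = c • LinearMap.id := by
  let f : V ⟶ V := ⟨FGModuleCat.ofHom T, fun g => by
    ext x; exact LinearMap.congr_fun (hT g) x⟩
  obtain ⟨c, hc⟩ := CategoryTheory.endomorphism_simple_eq_smul_id ℂ f
  refine ⟨c, ?_⟩
  have := congrArg (fun f : V ⟶ V => f.hom.hom.hom) hc
  exact this.symm

lemma sum_extZero [Group G] [Fintype G] (L : Subgroup G) (f : ↥L → ℂ) :
    ∑ x : G, extZero L f x = ∑ k : ↥L, f k := by
  classical
  rw [← Finset.sum_filter_of_ne (p := (· ∈ L))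
      (by intro x _ hx; by_contra h; exact hx (dif_neg h))]
  rw [Finset.sum_subtype (p := (· ∈ L)) (Finset.univ.filter (· ∈ L))
      (fun x => by simp) (extZero L f)]
  exact Finset.sum_congr rfl fun k _ => dif_pos k.2

lemma char_comm {X : Type} [Group X] {φ : X → ℂ} (h : IsIrrChar X φ) (a b : X) :
    φ (a * b) = φ (b * a) := by
  obtain ⟨V, _, rfl⟩ := h
  exact FDRep.char_mul_comm V b a

lemma central [Group G] [Fintype G] (K H : Subgroup G) (hKn : K.Normal) (hKH : K ≤ H)
    (ζ : G → ℂ) (hζ1 : ζ 1 = 1) (hζm : ∀ a ∈ K, ∀ b ∈ K, ζ (a * b) = ζ a * ζ b)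
    (hζinv : ∀ g : G, ∀ x ∈ K, ζ (g⁻¹ * x * g) = ζ x)
    (φ : ↥H → ℂ) (hφ : IsIrrChar ↥H φ)
    (hover : innerSub K (resTo K hKH φ) (fun x : ↥K => ζ ↑x) ≠ 0) :
    ∀ (x k : G) (hx : x ∈ H) (hk : k ∈ K),
      φ ⟨x * k, mul_mem hx (hKH hk)⟩ = ((starRingEnd ℂ) (ζ k))⁻¹ * φ ⟨x, hx⟩ := by
  obtain ⟨V, hsimp, hchar⟩ := hφ
  haveI := hsimp
  set c : G → ℂ := fun g => (starRingEnd ℂ) (ζ g) with hc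
  have hζinv1 : ∀ k ∈ K, ζ k * ζ k⁻¹ = 1 := by
    intro k hk
    rw [← hζm k hk k⁻¹ (inv_mem hk), mul_inv_cancel, hζ1]
  have hζne : ∀ k ∈ K, ζ k ≠ 0 := by
    intro k hk h0
    have := hζinv1 k hk
    rw [h0, zero_mul] at this
    exact one_ne_zero this.symm
  have hcm : ∀ a ∈ K, ∀ b ∈ K, c (a * b) = c a * c b := by
    intro a ha b hb; simp only [hc, hζm a ha b hb, map_mul]
  have hcne : ∀ k ∈ K, c k ≠ 0 := by
    intro k hk h0
    exact hζne k hk (by simpa [hc, map_eq_zero] using h0)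
  have hcinvmul : ∀ k ∈ K, c k⁻¹ * c k = 1 := by
    intro k hk
    rw [← hcm k⁻¹ (inv_mem hk) k hk, inv_mul_cancel]
    simp [hc, hζ1]
  have hcconj : ∀ g : G, ∀ k ∈ K, c (g⁻¹ * k * g) = c k := by
    intro g k hk; simp only [hc, hζinv g k hk]
  -- inclusion of K into H
  let inc : ↥K → ↥H := fun k => ⟨(k : G), hKH k.2⟩
  have hinc_mul : ∀ a b : ↥K, inc a * inc b = inc (a * b) := fun a b => rfl
  -- the averaging operator
  set S : V →ₗ[ℂ] V := ∑ k : ↥K, c ↑k • V.ρ (inc k) with hS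
  set T : V →ₗ[ℂ] V := (Nat.card ↥K : ℂ)⁻¹ • S with hT
  -- key identity: ρ(inc k0) * T = (c k0)⁻¹ • T
  have key : ∀ k0 : ↥K, V.ρ (inc k0) * S = (c ↑k0)⁻¹ • S := by
    intro k0
    rw [hS, Finset.mul_sum]
    have e1 : ∀ k : ↥K, V.ρ (inc k0) * (c ↑k • V.ρ (inc k)) = c ↑k • V.ρ (inc (k0 * k)) := by
      intro k
      rw [mul_smul_comm, ← map_mul, hinc_mul]
    simp_rw [e1]
    have e2 : ∑ k : ↥K, c ↑k • V.ρ (inc (k0 * k)) =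
        ∑ k : ↥K, ((c ↑k0)⁻¹ * c ↑k) • V.ρ (inc k) := by
      apply Fintype.sum_equiv (Equiv.mulLeft k0)
      intro k
      have hco : ((k0 * k : ↥K) : G) = (k0 : G) * k := rfl
      rw [Equiv.coe_mulLeft]  -- maybe not needed
      congr 1
      rw [hco, hcm _ k0.2 _ k.2, ← mul_assoc, inv_mul_cancel₀ (hcne _ k0.2), one_mul]
    rw [e2, Finset.smul_sum]
    simp_rw [mul_smul]
  have comm : ∀ h : ↥H, T ∘ₗ V.ρ h = V.ρ h ∘ₗ T := by
    intro h
    have : S * V.ρ h = V.ρ h * S := by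
      rw [hS, Finset.sum_mul, Finset.mul_sum]
      apply Fintype.sum_equiv (MulAut.conjNormal ((h : G)⁻¹) : ↥K ≃* ↥K).toEquiv
      intro k
      simp only [MulEquiv.toEquiv_eq_coe, EquivLike.coe_coe]
      rw [smul_mul_assoc, mul_smul_comm, ← map_mul, ← map_mul]
      have hck : c ↑((MulAut.conjNormal ((h : G)⁻¹)) k) = c ↑k := by
        rw [MulAut.conjNormal_apply, inv_inv]
        exact hcconj (h : G) ↑k k.2
      rw [hck]
      congr 2
      apply Subtype.ext
      show (k : G) * h = (h : G) * ((h : G)⁻¹ * k * (h : G)⁻¹⁻¹)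
      group
    have : T * V.ρ h = V.ρ h * T := by
      rw [hT, smul_mul_assoc, mul_smul_comm, this]
    exact this
  obtain ⟨c0, hc0⟩ := schur_scalar V T comm
  -- trace of T equals the inner product
  have htrρ : ∀ k : ↥K, LinearMap.trace ℂ V (V.ρ (inc k)) = φ (inc k) := by
    intro k; rw [← hchar]; rfl
  have htrace : LinearMap.trace ℂ V T = innerSub K (resTo K hKH φ) (fun x : ↥K => ζ ↑x) := by
    rw [hT, map_smul, hS, map_sum]
    simp_rw [map_smul, htrρ]
    rw [innerSub]
    have hpt : ∀ x : G, extZero K (resTo K hKH φ) x *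
        (starRingEnd ℂ) (extZero K (fun x : ↥K => ζ ↑x) x) =
        extZero K (fun k : ↥K => c ↑k * φ (inc k)) x := by
      intro x
      by_cases hx : x ∈ K
      · simp only [extZero, dif_pos hx, resTo, hc]
        ring
      · simp [extZero, dif_neg hx]
    simp_rw [hpt]
    rw [sum_extZero]
    simp [smul_eq_mul]
  have htrne : LinearMap.trace ℂ V T ≠ 0 := htrace ▸ hover
  have hc0ne : c0 ≠ 0 := by
    intro h0
    rw [hc0, h0, zero_smul, map_zero] at htrne
    exact htrne rfl
  -- hence ρ(inc k) is scalar
  have hρscal : ∀ k : ↥K, V.ρ (inc k) = (c ↑k)⁻¹ • (1 : V →ₗ[ℂ] V) := by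
    intro k
    have hKcard : (Nat.card ↥K : ℂ) ≠ 0 := by
      simpa using Nat.card_pos (α := ↥K).ne'
    have hSsc : S = (Nat.card ↥K : ℂ) • T := by
      rw [hT, smul_smul, mul_inv_cancel₀ hKcard, one_smul]
    have h1 := key k
    rw [hSsc, hc0] at h1
    -- h1 : ρ (inc k) * ((N • (c0 • id))) = (c k)⁻¹ • (N • (c0 • id))
    have h2 : ((Nat.card ↥K : ℂ) * c0) • V.ρ (inc k) =
        ((Nat.card ↥K : ℂ) * c0) • ((c ↑k)⁻¹ • (1 : V →ₗ[ℂ] V)) := by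
      rw [mul_smul, mul_smul]
      calc (Nat.card ↥K : ℂ) • c0 • V.ρ (inc k)
          = V.ρ (inc k) * ((Nat.card ↥K : ℂ) • c0 • LinearMap.id) := by
            rw [mul_smul_comm, mul_smul_comm]; simp [Module.End.mul_eq_comp]
        _ = (c ↑k)⁻¹ • ((Nat.card ↥K : ℂ) • c0 • LinearMap.id) := h1
        _ = (Nat.card ↥K : ℂ) • c0 • ((c ↑k)⁻¹ • (1 : V →ₗ[ℂ] V)) := by
            rw [smul_comm ((c ↑k)⁻¹), smul_comm ((c ↑k)⁻¹)]; rfl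
    exact smul_right_injective _ (mul_ne_zero hKcard hc0ne) h2
  intro x k hx hk
  have hxk : (⟨x * k, mul_mem hx (hKH hk)⟩ : ↥H) = ⟨x, hx⟩ * inc ⟨k, hk⟩ := rfl
  rw [hxk, ← hchar]
  show LinearMap.trace ℂ V (V.ρ (⟨x, hx⟩ * inc ⟨k, hk⟩)) = _
  rw [map_mul, hρscal ⟨k, hk⟩, mul_smul_comm, mul_one, map_smul]
  rw [smul_eq_mul]
  rfl
lemma mem_stab_of_mem [Group G] {H : Subgroup G} {φ : ↥H → ℂ}
    (hcl : ∀ a b : ↥H, φ (a * b) = φ (b * a)) {h : G} (hh : h ∈ H) :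
    h ∈ stabSet H φ := by
  constructor
  · intro x
    constructor
    · intro hx; exact mul_mem (mul_mem (inv_mem hh) hx) hh
    · intro hx
      rw [show x = h * (h⁻¹ * x * h) * h⁻¹ by group]
      exact mul_mem (mul_mem hh hx) (inv_mem hh)
  · intro x
    by_cases hx : x ∈ H
    · have hx' : h⁻¹ * x * h ∈ H := mul_mem (mul_mem (inv_mem hh) hx) hh
      rw [extZero, extZero, dif_pos hx, dif_pos hx']
      calc φ ⟨h⁻¹ * x * h, hx'⟩
          = φ (⟨h⁻¹ * x, mul_mem (inv_mem hh) hx⟩ * ⟨h, hh⟩) := rfl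
        _ = φ (⟨h, hh⟩ * ⟨h⁻¹ * x, mul_mem (inv_mem hh) hx⟩) := hcl _ _
        _ = φ ⟨x, hx⟩ := by
              congr 1
              exact Subtype.ext (show h * (h⁻¹ * x) = x by group)
    · have hx' : ¬ (h⁻¹ * x * h ∈ H) := by
        intro hmem
        apply hx
        rw [show x = h * (h⁻¹ * x * h) * h⁻¹ by group]
        exact mul_mem (mul_mem hh hmem) (inv_mem hh)
      rw [extZero, extZero, dif_neg hx, dif_neg hx']

lemma stab_mul [Group G] {H : Subgroup G} {φ : ↥H → ℂ} {a b : G}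
    (ha : a ∈ stabSet H φ) (hb : b ∈ stabSet H φ) : a * b ∈ stabSet H φ := by
  obtain ⟨ha1, ha2⟩ := ha
  obtain ⟨hb1, hb2⟩ := hb
  constructor
  · intro x
    rw [show (a * b)⁻¹ * x * (a * b) = b⁻¹ * (a⁻¹ * x * a) * b by group]
    exact (ha1 x).trans (hb1 _)
  · intro x
    rw [show (a * b)⁻¹ * x * (a * b) = b⁻¹ * (a⁻¹ * x * a) * b by group, hb2, ha2]

lemma stab_inv [Group G] {H : Subgroup G} {φ : ↥H → ℂ} {a : G}
    (ha : a ∈ stabSet H φ) : a⁻¹ ∈ stabSet H φ := by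
  obtain ⟨ha1, ha2⟩ := ha
  constructor
  · intro x
    have h1 := ha1 (a * x * a⁻¹)
    rw [show a⁻¹ * (a * x * a⁻¹) * a = x by group] at h1
    rw [show a⁻¹⁻¹ * x * a⁻¹ = a * x * a⁻¹ by group]
    exact h1.symm
  · intro x
    have h2 := ha2 (a * x * a⁻¹)
    rw [show a⁻¹ * (a * x * a⁻¹) * a = x by group] at h2
    rw [show a⁻¹⁻¹ * x * a⁻¹ = a * x * a⁻¹ by group]
    exact h2.symm


theorem stmt_12 [Group G] [Fintype G] (K : Subgroup G) (hK : K.Normal) (ζ : G → ℂ)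
    (hζlin : IsLinOn K ζ) (hζinv : ∀ g : G, ∀ x ∈ K, ζ (g⁻¹ * x * g) = ζ x)
    (Gbar : Subgroup G) (hcover : (Gbar : Set G) * (K : Set G) = Set.univ)
    (H : Subgroup G) (hKH : K ≤ H) (φ : ↥H → ℂ) (hφ : IsIrrChar ↥H φ)
    (hover : innerSub K (resTo K hKH φ) (fun x : ↥K => ζ ↑x) ≠ 0)
    (hres : IsIrrChar ↥(Gbar ⊓ H) (resTo (Gbar ⊓ H) inf_le_right φ)) :
    stabSet H φ =
      {g : G | g ∈ Gbar ∧ g ∈ stabSet (Gbar ⊓ H) (resTo (Gbar ⊓ H) inf_le_right φ)} *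
        (K : Set G) := by
  have hclass : ∀ a b : ↥H, φ (a * b) = φ (b * a) := char_comm hφ
  have hinf : Gbar ⊓ H ≤ H := inf_le_right
  have hdec : ∀ g : G, ∃ s ∈ Gbar, ∃ k ∈ K, s * k = g := by
    intro g
    have : g ∈ (Gbar : Set G) * (K : Set G) := by rw [hcover]; trivial
    exact Set.mem_mul.mp this
  have hHdec : ∀ x ∈ H, ∃ σ, (σ ∈ Gbar ⊓ H) ∧ ∃ τ ∈ K, σ * τ = x := by
    intro x hx
    obtain ⟨s, hs, k, hk, hsk⟩ := hdec x
    have hsH : s ∈ H := by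
      rw [show s = x * k⁻¹ by rw [← hsk]; group]
      exact mul_mem hx (inv_mem (hKH hk))
    exact ⟨s, Subgroup.mem_inf.mpr ⟨hs, hsH⟩, k, hk, hsk⟩
  have hcent := central K H hK hKH ζ hζlin.1 hζlin.2 hζinv φ hφ hover
  ext g
  constructor
  · rintro ⟨hg1, hg2⟩
    obtain ⟨s, hsG, k, hkK, hsk⟩ := hdec g
    have hk_stab : k ∈ stabSet H φ := mem_stab_of_mem hclass (hKH hkK)
    have hs_stab : s ∈ stabSet H φ := by
      rw [show s = g * k⁻¹ by rw [← hsk]; group]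
      exact stab_mul ⟨hg1, hg2⟩ (stab_inv hk_stab)
    obtain ⟨hs1, hs2⟩ := hs_stab
    have cond1 : ∀ x : G, x ∈ Gbar ⊓ H ↔ s⁻¹ * x * s ∈ Gbar ⊓ H := by
      intro x
      rw [Subgroup.mem_inf, Subgroup.mem_inf]
      have hGb : x ∈ Gbar ↔ s⁻¹ * x * s ∈ Gbar := by
        constructor
        · intro hx; exact mul_mem (mul_mem (inv_mem hsG) hx) hsG
        · intro hx
          rw [show x = s * (s⁻¹ * x * s) * s⁻¹ by group]
          exact mul_mem (mul_mem hsG hx) (inv_mem hsG)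
      exact and_congr hGb (hs1 x)
    refine Set.mem_mul.mpr ⟨s, ⟨hsG, cond1, ?_⟩, k, hkK, hsk⟩
    intro x
    by_cases hx : x ∈ Gbar ⊓ H
    · have hx' : s⁻¹ * x * s ∈ Gbar ⊓ H := (cond1 x).mp hx
      rw [extZero, extZero, dif_pos hx, dif_pos hx']
      have h3 := hs2 x
      rw [extZero, extZero, dif_pos (Subgroup.mem_inf.mp hx).2,
        dif_pos (Subgroup.mem_inf.mp hx').2] at h3
      exact h3
    · rw [extZero, extZero, dif_neg hx, dif_neg (fun h => hx ((cond1 x).mpr h))]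
  · intro hg
    obtain ⟨s, hsmem, k, hkK, hsk⟩ := Set.mem_mul.mp hg
    obtain ⟨hsG, hs1, hs2⟩ := hsmem
    have hk_stab : k ∈ stabSet H φ := mem_stab_of_mem hclass (hKH hkK)
    have cond1 : ∀ x : G, x ∈ H ↔ s⁻¹ * x * s ∈ H := by
      intro x
      constructor
      · intro hx
        obtain ⟨σ, hσ, τ, hτ, hστ⟩ := hHdec x hx
        rw [← hστ, show s⁻¹ * (σ * τ) * s = (s⁻¹ * σ * s) * (s⁻¹ * τ * s) by group]
        refine mul_mem (hinf ((hs1 σ).mp hσ)) (hKH ?_)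
        simpa using hK.conj_mem τ hτ s⁻¹
      · intro hx
        obtain ⟨σ, hσ, τ, hτ, hστ⟩ := hHdec _ hx
        rw [show x = s * (s⁻¹ * x * s) * s⁻¹ by group, ← hστ,
          show s * (σ * τ) * s⁻¹ = (s * σ * s⁻¹) * (s * τ * s⁻¹) by group]
        refine mul_mem (hinf ?_) (hKH (hK.conj_mem τ hτ s))
        have h4 := hs1 (s * σ * s⁻¹)
        rw [show s⁻¹ * (s * σ * s⁻¹) * s = σ by group] at h4
        exact h4.mpr hσ
    have hs_stab : s ∈ stabSet H φ := by
      refine ⟨cond1, ?_⟩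
      intro x
      by_cases hx : x ∈ H
      · obtain ⟨σ, hσ, τ, hτ, hστ⟩ := hHdec x hx
        have hσH : σ ∈ H := hinf hσ
        have hσ's : s⁻¹ * σ * s ∈ Gbar ⊓ H := (hs1 σ).mp hσ
        have hτ's : s⁻¹ * τ * s ∈ K := by simpa using hK.conj_mem τ hτ s⁻¹
        have hmem : s⁻¹ * x * s ∈ H := (cond1 x).mp hx
        rw [extZero, extZero, dif_pos hmem, dif_pos hx]
        have e1 : φ ⟨s⁻¹ * x * s, hmem⟩ =
            ((starRingEnd ℂ) (ζ (s⁻¹ * τ * s)))⁻¹ * φ ⟨s⁻¹ * σ * s, hinf hσ's⟩ := by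
          have h2 := hcent (s⁻¹ * σ * s) (s⁻¹ * τ * s) (hinf hσ's) hτ's
          have heq : (⟨s⁻¹ * x * s, hmem⟩ : ↥H) =
              ⟨(s⁻¹ * σ * s) * (s⁻¹ * τ * s),
                mul_mem (hinf hσ's) (hKH hτ's)⟩ := by
            apply Subtype.ext
            show s⁻¹ * x * s = (s⁻¹ * σ * s) * (s⁻¹ * τ * s)
            rw [← hστ]; group
          rw [heq]
          exact h2
        have e2 : ζ (s⁻¹ * τ * s) = ζ τ := hζinv s τ hτ
        have e3 : φ ⟨s⁻¹ * σ * s, hinf hσ's⟩ = φ ⟨σ, hσH⟩ := by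
          have h5 := hs2 σ
          rw [extZero, extZero, dif_pos hσ's, dif_pos hσ] at h5
          exact h5
        have e4 : φ ⟨x, hx⟩ = ((starRingEnd ℂ) (ζ τ))⁻¹ * φ ⟨σ, hσH⟩ := by
          have h6 := hcent σ τ hσH hτ
          have heq : (⟨x, hx⟩ : ↥H) = ⟨σ * τ, mul_mem hσH (hKH hτ)⟩ :=
            Subtype.ext (show x = σ * τ from hστ.symm)
          rw [heq]
          exact h6
        rw [e1, e2, e3, e4]
      · rw [extZero, extZero, dif_neg (fun h => hx ((cond1 x).mpr h)), dif_neg hx]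
    rw [← hsk]
    exact stab_mul hs_stab hk_stab

end
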